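/- For every positive integer n and every real y > 0, the function s ↦ (πny/6)^{−1/4}·W(πny/6, s) is differentiable at s = 3/4 and its derivative there equals 4π·e^{−πny/12}·α(ny/6). -/

import Mathlib

open Real MeasureTheory

open Set

set_option maxHeartbeats 1000000


-- basic helper lemmas
lemma intExpRpow {c p : ℝ} (hc : 0 < c) (hp : -1 < p) :
    IntegrableOn (fun t : ℝ => Real.exp (-c*t) * t ^ p) (Set.Ioi 0) := by
  have h := integrableOn_rpow_mul_exp_neg_mul_rpow (p := 1) hp zero_lt_one hc
  refine h.congr_fun (fun t ht => ?_) measurableSet_Ioi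
  simp only [Real.rpow_one]
  ring

lemma gammaInt {c a : ℝ} (hc : 0 < c) (ha : 0 < a) :
    ∫ t in Set.Ioi (0:ℝ), Real.exp (-c*t) * t ^ (a - 1) = (1/c) ^ a * Real.Gamma a := by
  rw [← Real.integral_rpow_mul_exp_neg_mul_Ioi ha hc]
  refine setIntegral_congr_fun measurableSet_Ioi (fun t ht => ?_)
  rw [neg_mul]
  ring

lemma abs_exp_sub_one_le' (x : ℝ) : |Real.exp x - 1| ≤ |x| * Real.exp |x| := by
  rcases le_or_gt 0 x with hx | hx
  · rw [abs_of_nonneg hx, abs_of_nonneg (by linarith [Real.one_le_exp hx])]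
    have h1 : -x + 1 ≤ Real.exp (-x) := by linarith [Real.add_one_le_exp (-x)]
    have h2 : Real.exp (-x) * Real.exp x = 1 := by rw [← Real.exp_add]; simp
    nlinarith [Real.exp_pos x]
  · rw [abs_of_neg hx, abs_of_nonpos (by linarith [Real.exp_lt_one_iff.mpr hx] : Real.exp x - 1 ≤ 0)]
    have h1 : x + 1 ≤ Real.exp x := Real.add_one_le_exp x
    have h2 : (1:ℝ) ≤ Real.exp (-x) := Real.one_le_exp (by linarith)
    nlinarith

lemma rpow_le_sum {t a b p : ℝ} (ht : 0 < t) (h1 : a ≤ p) (h2 : p ≤ b) :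
    t ^ p ≤ t ^ a + t ^ b := by
  rcases le_total 1 t with h | h
  · have := Real.rpow_le_rpow_of_exponent_le h h2
    have := Real.rpow_pos_of_pos ht a
    linarith
  · have := Real.rpow_le_rpow_of_exponent_ge ht h h1
    have := Real.rpow_pos_of_pos ht b
    linarith

lemma abs_log_le (t : ℝ) (ht : 0 < t) : |Real.log t| ≤ 8 * t ^ (-(1/8) : ℝ) + t := by
  have h8 : (0:ℝ) < t ^ (-(1/8):ℝ) := Real.rpow_pos_of_pos ht _
  rw [abs_le]
  constructor
  · have h1 : Real.log (t ^ (-(1/8):ℝ)) ≤ t ^ (-(1/8):ℝ) - 1 := Real.log_le_sub_one_of_pos h8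
    rw [Real.log_rpow ht] at h1
    nlinarith
  · have := Real.log_le_sub_one_of_pos ht
    nlinarith

lemma rpow_eighth (t : ℝ) (ht : 0 < t) (k : ℕ) :
    t ^ ((k : ℝ)/8) = (t ^ ((1:ℝ)/8)) ^ k := by
  rw [← Real.rpow_natCast (t ^ ((1:ℝ)/8)) k, ← Real.rpow_mul ht.le]
  ring_nf

lemma rpow_eighth_neg (t : ℝ) (ht : 0 < t) (k : ℕ) :
    t ^ (-(k : ℝ)/8) = ((t ^ ((1:ℝ)/8)) ^ k)⁻¹ := by
  rw [show (-(k:ℝ)/8) = -((k:ℝ)/8) by ring, Real.rpow_neg ht.le, rpow_eighth t ht k]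

lemma t_eq_b8 (t : ℝ) (ht : 0 < t) : t = (t ^ ((1:ℝ)/8)) ^ 8 := by
  have := rpow_eighth t ht 8
  norm_num at this
  simpa using this

lemma core_ineq (t : ℝ) (ht : 0 < t) :
    (t^(-(5/8):ℝ) + t^(-(3/8):ℝ)) * ((1+t) * (t * (8*t^(-(1/8):ℝ) + t + 1)))
      ≤ 40 * (t^((1:ℝ)/4) + t^((21:ℝ)/8)) := by
  set b := t ^ ((1:ℝ)/8) with hbdef
  have hb : 0 < b := Real.rpow_pos_of_pos ht _
  have e5 : t ^ (-(5/8):ℝ) = (b^5)⁻¹ := by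
    rw [show (-(5/8):ℝ) = -((5:ℕ):ℝ)/8 by norm_num]; exact rpow_eighth_neg t ht 5
  have e3 : t ^ (-(3/8):ℝ) = (b^3)⁻¹ := by
    rw [show (-(3/8):ℝ) = -((3:ℕ):ℝ)/8 by norm_num]; exact rpow_eighth_neg t ht 3
  have e1 : t ^ (-(1/8):ℝ) = (b^1)⁻¹ := by
    rw [show (-(1/8):ℝ) = -((1:ℕ):ℝ)/8 by norm_num]; exact rpow_eighth_neg t ht 1
  have e14 : t ^ ((1:ℝ)/4) = b^2 := by
    rw [show ((1:ℝ)/4) = ((2:ℕ):ℝ)/8 by norm_num]; exact rpow_eighth t ht 2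
  have e218 : t ^ ((21:ℝ)/8) = b^21 := by
    rw [show ((21:ℝ)/8) = ((21:ℕ):ℝ)/8 by norm_num]; exact rpow_eighth t ht 21
  have et : t = b^8 := t_eq_b8 t ht
  rw [e5, e3, e1, e14, e218, et]
  have expand : ((b^5)⁻¹ + (b^3)⁻¹) * ((1+b^8) * (b^8 * (8*(b^1)⁻¹ + b^8 + 1)))
      = 8*b^2 + b^3 + 8*b^4 + b^5 + 8*b^10 + 2*b^11 + 8*b^12 + 2*b^13 + b^19 + b^21 := by
    field_simp
    ring
  rw [expand]
  have f : ∀ k : ℕ, 2 ≤ k → k ≤ 21 → b ^ k ≤ b ^ 2 + b ^ 21 := by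
    intro k h2 h21
    rcases le_total b 1 with h | h
    · have h1 := pow_le_pow_of_le_one hb.le h h2
      have h3 : (0:ℝ) ≤ b ^ 21 := by positivity
      linarith
    · have h1 := pow_le_pow_right₀ h h21
      have h3 : (0:ℝ) ≤ b ^ 2 := by positivity
      linarith
  have f2 := f 2 (by norm_num) (by norm_num)
  have f3 := f 3 (by norm_num) (by norm_num)
  have f4 := f 4 (by norm_num) (by norm_num)
  have f5 := f 5 (by norm_num) (by norm_num)
  have f10 := f 10 (by norm_num) (by norm_num)
  have f11 := f 11 (by norm_num) (by norm_num)
  have f12 := f 12 (by norm_num) (by norm_num)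
  have f13 := f 13 (by norm_num) (by norm_num)
  have f19 := f 19 (by norm_num) (by norm_num)
  have f21 := f 21 (by norm_num) (by norm_num)
  linarith

lemma core_ineq2 (t : ℝ) (ht : 0 < t) :
    (t^(-(5/8):ℝ) + t^(-(3/8):ℝ)) * (t * (1+t))
      ≤ 40 * (t^((1:ℝ)/4) + t^((21:ℝ)/8)) := by
  set b := t ^ ((1:ℝ)/8) with hbdef
  have hb : 0 < b := Real.rpow_pos_of_pos ht _
  have e5 : t ^ (-(5/8):ℝ) = (b^5)⁻¹ := by
    rw [show (-(5/8):ℝ) = -((5:ℕ):ℝ)/8 by norm_num]; exact rpow_eighth_neg t ht 5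
  have e3 : t ^ (-(3/8):ℝ) = (b^3)⁻¹ := by
    rw [show (-(3/8):ℝ) = -((3:ℕ):ℝ)/8 by norm_num]; exact rpow_eighth_neg t ht 3
  have e14 : t ^ ((1:ℝ)/4) = b^2 := by
    rw [show ((1:ℝ)/4) = ((2:ℕ):ℝ)/8 by norm_num]; exact rpow_eighth t ht 2
  have e218 : t ^ ((21:ℝ)/8) = b^21 := by
    rw [show ((21:ℝ)/8) = ((21:ℕ):ℝ)/8 by norm_num]; exact rpow_eighth t ht 21
  have et : t = b^8 := t_eq_b8 t ht
  rw [e5, e3, e14, e218, et]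
  have expand : ((b^5)⁻¹ + (b^3)⁻¹) * (b^8 * (1+b^8)) = b^3 + b^5 + b^11 + b^13 := by
    field_simp
    ring
  rw [expand]
  have f : ∀ k : ℕ, 2 ≤ k → k ≤ 21 → b ^ k ≤ b ^ 2 + b ^ 21 := by
    intro k h2 h21
    rcases le_total b 1 with h | h
    · have h1 := pow_le_pow_of_le_one hb.le h h2
      have h3 : (0:ℝ) ≤ b ^ 21 := by positivity
      linarith
    · have h1 := pow_le_pow_right₀ h h21
      have h3 : (0:ℝ) ≤ b ^ 2 := by positivity
      linarith
  have f3 := f 3 (by norm_num) (by norm_num)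
  have f5 := f 5 (by norm_num) (by norm_num)
  have f11 := f 11 (by norm_num) (by norm_num)
  have f13 := f 13 (by norm_num) (by norm_num)
  have hpos : (0:ℝ) ≤ b^2 + b^21 := by positivity
  linarith


-- continuity helpers
lemma contOn_rpow (a : ℝ) : ContinuousOn (fun t : ℝ => t ^ a) (Set.Ioi 0) :=
  ContinuousOn.rpow_const continuousOn_id (fun t ht => Or.inl (ne_of_gt ht))

lemma contOn_one_add_rpow (a : ℝ) : ContinuousOn (fun t : ℝ => (1+t) ^ a) (Set.Ioi 0) :=
  ContinuousOn.rpow_const (continuous_const.add continuous_id).continuousOn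
    (fun t ht => Or.inl (by simp only [Set.mem_Ioi] at ht; positivity))

lemma contOn_exp (c : ℝ) : ContinuousOn (fun t : ℝ => Real.exp (-c*t)) (Set.Ioi 0) :=
  (by fun_prop : Continuous fun t : ℝ => Real.exp (-c*t)).continuousOn

lemma contOn_log : ContinuousOn Real.log (Set.Ioi 0) :=
  Real.continuousOn_log.mono (fun x hx => ne_of_gt hx)

lemma contOn_log1p : ContinuousOn (fun t : ℝ => Real.log (1+t)) (Set.Ioi 0) :=
  ContinuousOn.log (continuous_const.add continuous_id).continuousOn
    (fun t ht => by simp only [Set.mem_Ioi] at ht; positivity)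

lemma abs_rpow_sub_one_le {t s : ℝ} (ht : 0 < t) (hs : |s - 3/4| ≤ 1) :
    |(1+t) ^ (s - 3/4) - 1| ≤ Real.log (1+t) * (1+t) := by
  have h1t : (0:ℝ) < 1 + t := by linarith
  have hL : 0 ≤ Real.log (1+t) := Real.log_nonneg (by linarith)
  rw [Real.rpow_def_of_pos h1t]
  have h := abs_exp_sub_one_le' (Real.log (1+t) * (s - 3/4))
  have habs : |Real.log (1+t) * (s - 3/4)| ≤ Real.log (1+t) := by
    rw [abs_mul, abs_of_nonneg hL]
    nlinarith [abs_nonneg (s - 3/4)]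
  have h2 : Real.exp |Real.log (1+t) * (s - 3/4)| ≤ 1 + t := by
    calc Real.exp |Real.log (1+t) * (s - 3/4)| ≤ Real.exp (Real.log (1+t)) :=
          Real.exp_le_exp.mpr habs
      _ = 1 + t := Real.exp_log h1t
  calc |Real.exp (Real.log (1+t) * (s - 3/4)) - 1|
      ≤ |Real.log (1+t) * (s - 3/4)| * Real.exp |Real.log (1+t) * (s - 3/4)| := h
    _ ≤ Real.log (1+t) * (1+t) :=
        mul_le_mul habs h2 (Real.exp_nonneg _) hL

lemma rpow_le_one_add {t s : ℝ} (ht : 0 < t) (hs : s - 3/4 ≤ 1) :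
    (1+t) ^ (s - 3/4) ≤ 1 + t := by
  calc (1+t) ^ (s - 3/4) ≤ (1+t) ^ (1:ℝ) :=
        Real.rpow_le_rpow_of_exponent_le (by linarith) hs
    _ = 1 + t := Real.rpow_one _

lemma stepD (C : ℝ) (hC : 0 < C) :
    HasDerivAt (fun s : ℝ => ∫ t in Set.Ioi (0:ℝ),
        Real.exp (-C*t) * t ^ (s - 5/4) * ((1+t) ^ (s - 3/4) - 1))
      (∫ t in Set.Ioi (0:ℝ), Real.exp (-C*t) * t ^ (-(1/2):ℝ) * Real.log (1+t))
      (3/4) := by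
  have hmeas : ∀ s : ℝ, AEStronglyMeasurable
      (fun t : ℝ => Real.exp (-C*t) * t ^ (s - 5/4) * ((1+t) ^ (s - 3/4) - 1))
      (volume.restrict (Set.Ioi 0)) := fun s =>
    (((contOn_exp C).mul (contOn_rpow _)).mul
      ((contOn_one_add_rpow _).sub continuousOn_const)).aestronglyMeasurable measurableSet_Ioi
  have hmeas' : AEStronglyMeasurable
      (fun t : ℝ => Real.exp (-C*t) *
        (t ^ ((3:ℝ)/4 - 5/4) * Real.log t * ((1+t) ^ ((3:ℝ)/4 - 3/4) - 1)
          + t ^ ((3:ℝ)/4 - 5/4) * ((1+t) ^ ((3:ℝ)/4 - 3/4) * Real.log (1+t))))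
      (volume.restrict (Set.Ioi 0)) := by
    apply ContinuousOn.aestronglyMeasurable _ measurableSet_Ioi
    exact (contOn_exp C).mul
      ((((contOn_rpow _).mul contOn_log).mul
          ((contOn_one_add_rpow _).sub continuousOn_const)).add
        ((contOn_rpow _).mul ((contOn_one_add_rpow _).mul contOn_log1p)))
  have hint : Integrable (fun t : ℝ =>
      Real.exp (-C*t) * t ^ ((3:ℝ)/4 - 5/4) * ((1+t) ^ ((3:ℝ)/4 - 3/4) - 1))
      (volume.restrict (Set.Ioi 0)) := by
    have : (fun t : ℝ =>
        Real.exp (-C*t) * t ^ ((3:ℝ)/4 - 5/4) * ((1+t) ^ ((3:ℝ)/4 - 3/4) - 1)) =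
        fun _ => (0:ℝ) := by
      funext t
      norm_num
    rw [this]
    exact integrable_zero _ _ _
  have h_bound : ∀ᵐ t ∂(volume.restrict (Set.Ioi (0:ℝ))),
      ∀ s ∈ Metric.ball ((3:ℝ)/4) (1/8),
      ‖Real.exp (-C*t) *
        (t ^ (s - 5/4) * Real.log t * ((1+t) ^ (s - 3/4) - 1)
          + t ^ (s - 5/4) * ((1+t) ^ (s - 3/4) * Real.log (1+t)))‖ ≤
      Real.exp (-C*t) *
        ((t^(-(5/8):ℝ) + t^(-(3/8):ℝ)) * ((1+t) * (t * (8*t^(-(1/8):ℝ) + t + 1)))) := by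
    rw [ae_restrict_iff' measurableSet_Ioi]
    refine Filter.Eventually.of_forall (fun t ht => fun s hs => ?_)
    simp only [Set.mem_Ioi] at ht
    rw [Metric.mem_ball, Real.dist_eq] at hs
    have hs1 : 5/8 < s := by cases' abs_lt.mp hs with h1 h2; linarith
    have hs2 : s < 7/8 := by cases' abs_lt.mp hs with h1 h2; linarith
    have h1t : (0:ℝ) < 1 + t := by linarith
    have hL : 0 ≤ Real.log (1+t) := Real.log_nonneg (by linarith)
    have hT : (0:ℝ) ≤ t ^ (s - 5/4) := Real.rpow_nonneg ht.le _
    have keyabs := abs_rpow_sub_one_le ht (by rw [abs_le]; constructor <;> linarith : |s - 3/4| ≤ 1)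
    have key2 := rpow_le_one_add ht (by linarith : s - 3/4 ≤ 1)
    have e1 : ‖Real.exp (-C*t) *
        (t ^ (s - 5/4) * Real.log t * ((1+t) ^ (s - 3/4) - 1)
          + t ^ (s - 5/4) * ((1+t) ^ (s - 3/4) * Real.log (1+t)))‖ ≤
        Real.exp (-C*t) * (t ^ (s - 5/4) * ((1+t) * (Real.log (1+t) * (|Real.log t| + 1)))) := by
      rw [Real.norm_eq_abs, abs_mul, abs_of_pos (Real.exp_pos _)]
      apply mul_le_mul_of_nonneg_left _ (Real.exp_pos _).le
      have h1 : |t ^ (s - 5/4) * Real.log t * ((1+t) ^ (s - 3/4) - 1)| ≤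
          t ^ (s - 5/4) * |Real.log t| * (Real.log (1+t) * (1+t)) := by
        rw [abs_mul, abs_mul, abs_of_nonneg hT]
        exact mul_le_mul_of_nonneg_left keyabs (by positivity)
      have h2 : |t ^ (s - 5/4) * ((1+t) ^ (s - 3/4) * Real.log (1+t))| ≤
          t ^ (s - 5/4) * ((1+t) * Real.log (1+t)) := by
        rw [abs_of_nonneg (by positivity)]
        exact mul_le_mul_of_nonneg_left (mul_le_mul_of_nonneg_right key2 hL) hT
      calc |t ^ (s - 5/4) * Real.log t * ((1+t) ^ (s - 3/4) - 1)
            + t ^ (s - 5/4) * ((1+t) ^ (s - 3/4) * Real.log (1+t))|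
          ≤ |t ^ (s - 5/4) * Real.log t * ((1+t) ^ (s - 3/4) - 1)|
            + |t ^ (s - 5/4) * ((1+t) ^ (s - 3/4) * Real.log (1+t))| := abs_add_le _ _
        _ ≤ t ^ (s - 5/4) * |Real.log t| * (Real.log (1+t) * (1+t))
            + t ^ (s - 5/4) * ((1+t) * Real.log (1+t)) := add_le_add h1 h2
        _ = t ^ (s - 5/4) * ((1+t) * (Real.log (1+t) * (|Real.log t| + 1))) := by ring
    refine e1.trans ?_
    apply mul_le_mul_of_nonneg_left _ (Real.exp_pos _).le
    apply mul_le_mul (rpow_le_sum ht (by linarith) (by linarith)) _ (by positivity)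
      (by positivity)
    apply mul_le_mul_of_nonneg_left _ (by linarith : (0:ℝ) ≤ 1+t)
    have hlog1 : Real.log (1+t) ≤ t := by
      have := Real.log_le_sub_one_of_pos h1t; linarith
    have hlogabs := abs_log_le t ht
    apply mul_le_mul hlog1 (by linarith) (by positivity) ht.le
  have bound_int : Integrable (fun t : ℝ => Real.exp (-C*t) *
      ((t^(-(5/8):ℝ) + t^(-(3/8):ℝ)) * ((1+t) * (t * (8*t^(-(1/8):ℝ) + t + 1)))))
      (volume.restrict (Set.Ioi 0)) := by
    apply Integrable.mono'
      (g := fun t : ℝ => 40 * (Real.exp (-C*t) * t^((1:ℝ)/4) + Real.exp (-C*t) * t^((21:ℝ)/8)))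
    · exact (((intExpRpow hC (by norm_num)).add (intExpRpow hC (by norm_num))).const_mul 40)
    · apply ContinuousOn.aestronglyMeasurable _ measurableSet_Ioi
      exact (contOn_exp C).mul
        (((contOn_rpow _).add (contOn_rpow _)).mul
          (((continuous_const.add continuous_id).continuousOn).mul
            ((continuous_id.continuousOn).mul
              ((((contOn_rpow _).const_smul (8:ℝ)).add continuous_id.continuousOn).add
                continuousOn_const))))
    · rw [ae_restrict_iff' measurableSet_Ioi]
      refine Filter.Eventually.of_forall (fun t ht => ?_)
      simp only [Set.mem_Ioi] at ht
      have hnn : (0:ℝ) ≤ Real.exp (-C*t) *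
          ((t^(-(5/8):ℝ) + t^(-(3/8):ℝ)) * ((1+t) * (t * (8*t^(-(1/8):ℝ) + t + 1)))) := by
        have h1 : (0:ℝ) ≤ t ^ (-(5/8):ℝ) := Real.rpow_nonneg ht.le _
        have h2 : (0:ℝ) ≤ t ^ (-(3/8):ℝ) := Real.rpow_nonneg ht.le _
        have h3 : (0:ℝ) ≤ t ^ (-(1/8):ℝ) := Real.rpow_nonneg ht.le _
        have := Real.exp_nonneg (-C*t)
        positivity
      rw [Real.norm_eq_abs, abs_of_nonneg hnn]
      calc Real.exp (-C*t) *
          ((t^(-(5/8):ℝ) + t^(-(3/8):ℝ)) * ((1+t) * (t * (8*t^(-(1/8):ℝ) + t + 1))))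
          ≤ Real.exp (-C*t) * (40 * (t^((1:ℝ)/4) + t^((21:ℝ)/8))) :=
            mul_le_mul_of_nonneg_left (core_ineq t ht) (Real.exp_pos _).le
        _ = 40 * (Real.exp (-C*t) * t^((1:ℝ)/4) + Real.exp (-C*t) * t^((21:ℝ)/8)) := by ring
  have h_diff : ∀ᵐ t ∂(volume.restrict (Set.Ioi (0:ℝ))),
      ∀ s ∈ Metric.ball ((3:ℝ)/4) (1/8),
      HasDerivAt (fun s : ℝ => Real.exp (-C*t) * t ^ (s - 5/4) * ((1+t) ^ (s - 3/4) - 1))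
        (Real.exp (-C*t) *
          (t ^ (s - 5/4) * Real.log t * ((1+t) ^ (s - 3/4) - 1)
            + t ^ (s - 5/4) * ((1+t) ^ (s - 3/4) * Real.log (1+t)))) s := by
    rw [ae_restrict_iff' measurableSet_Ioi]
    refine Filter.Eventually.of_forall (fun t ht => fun s _ => ?_)
    simp only [Set.mem_Ioi] at ht
    have h1t : (0:ℝ) < 1 + t := by linarith
    have hid : HasDerivAt (fun s : ℝ => s - 5/4) 1 s := (hasDerivAt_id s).sub_const _
    have hid' : HasDerivAt (fun s : ℝ => s - 3/4) 1 s := (hasDerivAt_id s).sub_const _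
    have d1 : HasDerivAt (fun s : ℝ => t ^ (s - 5/4)) (t ^ (s - 5/4) * Real.log t) s := by
      have h := ((Real.hasStrictDerivAt_const_rpow ht (s - 5/4)).hasDerivAt).comp s hid
      simpa [Function.comp_def] using h
    have d2 : HasDerivAt (fun s : ℝ => (1+t) ^ (s - 3/4))
        ((1+t) ^ (s - 3/4) * Real.log (1+t)) s := by
      have h := ((Real.hasStrictDerivAt_const_rpow h1t (s - 3/4)).hasDerivAt).comp s hid'
      simpa [Function.comp_def] using h
    have d3 := d1.mul (d2.sub_const 1)
    have d4 := d3.const_mul (Real.exp (-C*t))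
    have hfun : (fun s : ℝ => Real.exp (-C*t) * (t ^ (s - 5/4) * ((1+t) ^ (s - 3/4) - 1)))
        = fun s : ℝ => Real.exp (-C*t) * t ^ (s - 5/4) * ((1+t) ^ (s - 3/4) - 1) := by
      funext u; ring
    rw [← hfun]
    exact d4
  have H := hasDerivAt_integral_of_dominated_loc_of_deriv_le (Metric.ball_mem_nhds _ (by norm_num : (0:ℝ) < 1/8))
    (Filter.Eventually.of_forall hmeas) hint hmeas' h_bound bound_int h_diff
  have heq : (∫ t in Set.Ioi (0:ℝ), Real.exp (-C*t) *
      (t ^ ((3:ℝ)/4 - 5/4) * Real.log t * ((1+t) ^ ((3:ℝ)/4 - 3/4) - 1)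
        + t ^ ((3:ℝ)/4 - 5/4) * ((1+t) ^ ((3:ℝ)/4 - 3/4) * Real.log (1+t)))) =
      ∫ t in Set.Ioi (0:ℝ), Real.exp (-C*t) * t ^ (-(1/2):ℝ) * Real.log (1+t) := by
    refine setIntegral_congr_fun measurableSet_Ioi (fun t ht => ?_)
    norm_num
    ring
  rw [← heq]
  exact H.2

/-- The Whittaker function `W_{1/4, s-1/2}(y)` for `y > 0`, given by the integral
representation `W(y,s) = (y^s e^{−y/2}/Γ(s−1/4)) ∫_0^∞ e^{−yt} t^{s−5/4} (1+t)^{s−3/4} dt`. -/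
noncomputable def Wfun (y s : ℝ) : ℝ :=
  y ^ s * Real.exp (-y / 2) / Real.Gamma (s - 1 / 4) *
    ∫ t in Set.Ioi (0 : ℝ), Real.exp (-y * t) * t ^ (s - 5 / 4) * (1 + t) ^ (s - 3 / 4)

lemma stepDint (C : ℝ) (hC : 0 < C) {s : ℝ} (hs1 : 5/8 < s) (hs2 : s < 7/8) :
    IntegrableOn (fun t : ℝ => Real.exp (-C*t) * t ^ (s - 5/4) * ((1+t) ^ (s - 3/4) - 1))
      (Set.Ioi 0) := by
  apply Integrable.mono'
    (g := fun t : ℝ => 40 * (Real.exp (-C*t) * t^((1:ℝ)/4) + Real.exp (-C*t) * t^((21:ℝ)/8)))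
  · exact (((intExpRpow hC (by norm_num)).add (intExpRpow hC (by norm_num))).const_mul 40)
  · exact (((contOn_exp C).mul (contOn_rpow _)).mul
      ((contOn_one_add_rpow _).sub continuousOn_const)).aestronglyMeasurable measurableSet_Ioi
  · rw [ae_restrict_iff' measurableSet_Ioi]
    refine Filter.Eventually.of_forall (fun t ht => ?_)
    simp only [Set.mem_Ioi] at ht
    have h1t : (0:ℝ) < 1 + t := by linarith
    have hL : 0 ≤ Real.log (1+t) := Real.log_nonneg (by linarith)
    have hT : (0:ℝ) ≤ t ^ (s - 5/4) := Real.rpow_nonneg ht.le _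
    have keyabs := abs_rpow_sub_one_le ht (by rw [abs_le]; constructor <;> linarith : |s - 3/4| ≤ 1)
    have hlog1 : Real.log (1+t) ≤ t := by
      have := Real.log_le_sub_one_of_pos h1t; linarith
    have step1 : ‖Real.exp (-C*t) * t ^ (s - 5/4) * ((1+t) ^ (s - 3/4) - 1)‖ ≤
        Real.exp (-C*t) * ((t^(-(5/8):ℝ) + t^(-(3/8):ℝ)) * (t * (1+t))) := by
      rw [Real.norm_eq_abs, abs_mul, abs_mul, abs_of_pos (Real.exp_pos _), abs_of_nonneg hT,
        mul_assoc]
      apply mul_le_mul_of_nonneg_left _ (Real.exp_pos _).le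
      apply mul_le_mul (rpow_le_sum ht (by linarith) (by linarith))
        (keyabs.trans (by nlinarith)) (abs_nonneg _) (by positivity)
    refine step1.trans ?_
    calc Real.exp (-C*t) * ((t^(-(5/8):ℝ) + t^(-(3/8):ℝ)) * (t * (1+t)))
        ≤ Real.exp (-C*t) * (40 * (t^((1:ℝ)/4) + t^((21:ℝ)/8))) :=
          mul_le_mul_of_nonneg_left (core_ineq2 t ht) (Real.exp_pos _).le
      _ = 40 * (Real.exp (-C*t) * t^((1:ℝ)/4) + Real.exp (-C*t) * t^((21:ℝ)/8)) := by ring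

lemma gammaA (C : ℝ) (hC : 0 < C) {s : ℝ} (hs : 1/4 < s) :
    ∫ t in Set.Ioi (0:ℝ), Real.exp (-C*t) * t ^ (s - 5/4)
      = (1/C) ^ (s - 1/4) * Real.Gamma (s - 1/4) := by
  have h := gammaInt hC (a := s - 1/4) (by linarith)
  rw [show s - 1/4 - 1 = s - 5/4 by ring] at h
  exact h

lemma stepEq (C : ℝ) (hC : 0 < C) : ∀ᶠ s in nhds ((3:ℝ)/4),
    C ^ (-(1/4):ℝ) * Wfun C s = Real.exp (-C/2) *
      (1 + C ^ (s - 1/4) / Real.Gamma (s - 1/4) *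
        ∫ t in Set.Ioi (0:ℝ), Real.exp (-C*t) * t ^ (s - 5/4) * ((1+t) ^ (s - 3/4) - 1)) := by
  have hmem : Set.Ioo ((5:ℝ)/8) ((7:ℝ)/8) ∈ nhds ((3:ℝ)/4) :=
    isOpen_Ioo.mem_nhds (by norm_num)
  filter_upwards [hmem] with s hs
  obtain ⟨hs1, hs2⟩ := hs
  unfold Wfun
  have hInt1 : IntegrableOn (fun t : ℝ => Real.exp (-C*t) * t ^ (s - 5/4)) (Set.Ioi 0) :=
    intExpRpow hC (by linarith)
  have hInt2 := stepDint C hC hs1 hs2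
  have hsplit : (∫ t in Set.Ioi (0:ℝ), Real.exp (-C*t) * t ^ (s - 5/4) * (1+t) ^ (s - 3/4))
      = (∫ t in Set.Ioi (0:ℝ), Real.exp (-C*t) * t ^ (s - 5/4))
        + ∫ t in Set.Ioi (0:ℝ), Real.exp (-C*t) * t ^ (s - 5/4) * ((1+t) ^ (s - 3/4) - 1) := by
    rw [← integral_add hInt1 hInt2]
    refine setIntegral_congr_fun measurableSet_Ioi (fun t ht => ?_)
    ring
  have hnorm : (∫ t in Set.Ioi (0:ℝ), Real.exp (-C * t) * t ^ (s - 5 / 4) * (1 + t) ^ (s - 3 / 4))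
      = (1/C) ^ (s - 1/4) * Real.Gamma (s - 1/4)
        + ∫ t in Set.Ioi (0:ℝ), Real.exp (-C*t) * t ^ (s - 5/4) * ((1+t) ^ (s - 3/4) - 1) := by
    rw [hsplit, gammaA C hC (by linarith)]
  rw [hnorm]
  have hG : 0 < Real.Gamma (s - 1/4) := Real.Gamma_pos_of_pos (by linarith)
  have hP : 0 < C ^ (s - 1/4) := Real.rpow_pos_of_pos hC _
  have h1C : (1/C : ℝ) ^ (s - 1/4) = (C ^ (s - 1/4))⁻¹ := by
    rw [one_div, Real.inv_rpow hC.le]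
  rw [h1C]
  set P := C ^ (s - 1/4) with hPdef
  set G := Real.Gamma (s - 1/4) with hGdef
  set D := ∫ t in Set.Ioi (0:ℝ), Real.exp (-C*t) * t ^ (s - 5/4) * ((1+t) ^ (s - 3/4) - 1)
    with hDdef
  have hC14 : C ^ (-(1/4):ℝ) * C ^ s = P := by
    rw [hPdef, ← Real.rpow_add hC]
    ring_nf
  have expand : C ^ (-(1/4):ℝ) * (C ^ s * Real.exp (-C / 2) / G * (P⁻¹ * G + D))
      = (C ^ (-(1/4):ℝ) * C ^ s) * (Real.exp (-C / 2) / G) * (P⁻¹ * G + D) := by ring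
  rw [expand, hC14]
  field_simp

lemma mainC (C : ℝ) (hC : 0 < C) :
    HasDerivAt (fun s : ℝ => C ^ (-(1/4):ℝ) * Wfun C s)
      (Real.exp (-C/2) * (C ^ ((1:ℝ)/2) / Real.sqrt Real.pi *
        ∫ t in Set.Ioi (0:ℝ), Real.exp (-C*t) * t ^ (-(1/2):ℝ) * Real.log (1+t)))
      (3/4) := by
  rw [Filter.EventuallyEq.hasDerivAt_iff (stepEq C hC)]
  have hD := stepD C hC
  have hD0 : (∫ t in Set.Ioi (0:ℝ),
      Real.exp (-C*t) * t ^ ((3:ℝ)/4 - 5/4) * ((1+t) ^ ((3:ℝ)/4 - 3/4) - 1)) = 0 := by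
    have hzero : (fun t : ℝ =>
        Real.exp (-C*t) * t ^ ((3:ℝ)/4 - 5/4) * ((1+t) ^ ((3:ℝ)/4 - 3/4) - 1)) =
        fun _ => (0:ℝ) := by
      funext t
      norm_num
    rw [hzero, integral_zero]
  -- derivative of numerator C^(s-1/4)
  have hid : HasDerivAt (fun s : ℝ => s - 1/4) 1 ((3:ℝ)/4) := (hasDerivAt_id _).sub_const _
  have hnum : HasDerivAt (fun s : ℝ => C ^ (s - 1/4))
      (C ^ ((3:ℝ)/4 - 1/4) * Real.log C) ((3:ℝ)/4) := by
    have h := ((Real.hasStrictDerivAt_const_rpow hC ((3:ℝ)/4 - 1/4)).hasDerivAt).comp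
      ((3:ℝ)/4) hid
    simpa [Function.comp_def] using h
  have hden : HasDerivAt (fun s : ℝ => Real.Gamma (s - 1/4))
      (deriv Real.Gamma ((3:ℝ)/4 - 1/4)) ((3:ℝ)/4) := by
    have hdiff : DifferentiableAt ℝ Real.Gamma ((3:ℝ)/4 - 1/4) := by
      apply Real.differentiableAt_Gamma
      intro m
      have hm : (0:ℝ) ≤ (m:ℝ) := m.cast_nonneg
      refine ne_of_gt ?_
      linarith
    have h := (hdiff.hasDerivAt).comp ((3:ℝ)/4) hid
    simpa [Function.comp_def] using h
  have hGne : Real.Gamma ((3:ℝ)/4 - 1/4) ≠ 0 :=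
    ne_of_gt (Real.Gamma_pos_of_pos (by norm_num))
  have hg := hnum.div hden hGne
  have hcomb := (hg.mul hD).const_add 1
  have h2 := hcomb.const_mul (Real.exp (-C/2))
  convert h2 using 1
  · rfl
  · rfl
  rw [hD0]
  simp only [Pi.div_apply]
  rw [show (3:ℝ)/4 - 1/4 = 1/2 by norm_num, Real.Gamma_one_half_eq]
  ring

/-- `α(y) = (√y/(4π)) ∫_0^∞ e^{−πyt} t^{−1/2} log(1+t) dt`. -/
noncomputable def alphaFun (y : ℝ) : ℝ :=
  Real.sqrt y / (4 * Real.pi) *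
    ∫ t in Set.Ioi (0 : ℝ), Real.exp (-(Real.pi * y * t)) * t ^ (-(1 / 2) : ℝ) * Real.log (1 + t)

theorem whittaker_deriv_at_three_quarters (n : ℕ) (hn : 1 ≤ n) (y : ℝ) (hy : 0 < y) :
    HasDerivAt
      (fun s : ℝ => (Real.pi * n * y / 6) ^ (-(1 / 4) : ℝ) * Wfun (Real.pi * n * y / 6) s)
      (4 * Real.pi * Real.exp (-(Real.pi * n * y / 12)) * alphaFun (n * y / 6))
      (3 / 4) := by
  have hpi := Real.pi_pos
  have hn' : (0:ℝ) < n := Nat.cast_pos.mpr hn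
  have hC : (0:ℝ) < Real.pi * n * y / 6 :=
    div_pos (mul_pos (mul_pos hpi hn') hy) (by norm_num)
  have H := mainC _ hC
  convert H using 1
  unfold alphaFun
  have e2 : (∫ t in Set.Ioi (0:ℝ),
      Real.exp (-(Real.pi * ((n:ℝ) * y / 6) * t)) * t ^ (-(1/2):ℝ) * Real.log (1+t))
      = ∫ t in Set.Ioi (0:ℝ),
      Real.exp (-(Real.pi * (n:ℝ) * y / 6) * t) * t ^ (-(1/2):ℝ) * Real.log (1+t) := by
    congr 1
    funext t
    rw [show -(Real.pi * ((n:ℝ) * y / 6) * t) = -(Real.pi * (n:ℝ) * y / 6) * t by ring]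
  rw [e2]
  have e1 : ((Real.pi * (n:ℝ) * y / 6 : ℝ)) ^ ((1:ℝ)/2)
      = Real.sqrt Real.pi * Real.sqrt ((n:ℝ) * y / 6) := by
    rw [← Real.sqrt_eq_rpow,
      show (Real.pi * (n:ℝ) * y / 6 : ℝ) = Real.pi * ((n:ℝ) * y / 6) by ring]
    exact Real.sqrt_mul hpi.le _
  rw [e1]
  rw [show -(Real.pi * (n:ℝ) * y / 12) = -(Real.pi * (n:ℝ) * y / 6) / 2 by ring]
  have hsp : Real.sqrt Real.pi ≠ 0 := ne_of_gt (Real.sqrt_pos.mpr hpi)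
  field_simp
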